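/- For every natural number k ≥ 0, arctan(L_{2k+1}/2) − 2·arctan(φ^{2k+1}) = −π/2. -/

import Mathlib

open Real

/-- The Lucas numbers: `L 0 = 2`, `L 1 = 1`, `L (n+2) = L (n+1) + L n`. -/
def L : ℕ → ℝ
  | 0 => 2
  | 1 => 1
  | (n + 2) => L (n + 1) + L n

/-- The golden ratio `φ = (1 + √5)/2`. -/
noncomputable def phi : ℝ := (1 + Real.sqrt 5) / 2

noncomputable def psi : ℝ := (1 - Real.sqrt 5) / 2

lemma sqrt5_sq : Real.sqrt 5 ^ 2 = 5 := Real.sq_sqrt (by norm_num)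

lemma binet : ∀ n : ℕ, L n = phi ^ n + psi ^ n ∧ L (n + 1) = phi ^ (n + 1) + psi ^ (n + 1) := by
  intro n
  induction n with
  | zero =>
      constructor
      · norm_num [L]
      · simp [L, phi, psi]
  | succ n ih =>
      refine ⟨ih.2, ?_⟩
      have h1 : phi ^ 2 = phi + 1 := by
        have := sqrt5_sq; unfold phi; nlinarith
      have h2 : psi ^ 2 = psi + 1 := by
        have := sqrt5_sq; unfold psi; nlinarith
      show L (n + 2) = _
      rw [L, ih.1, ih.2]
      have : phi ^ (n + 2) = (phi + 1) * phi ^ n := by rw [← h1]; ring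
      rw [this]
      have : psi ^ (n + 2) = (psi + 1) * psi ^ n := by rw [← h2]; ring
      rw [this]; ring

lemma phi_mul_psi : phi * psi = -1 := by
  have := sqrt5_sq; unfold phi psi; nlinarith

lemma phi_pos : 0 < phi := by
  have : 0 ≤ Real.sqrt 5 := Real.sqrt_nonneg 5
  unfold phi; linarith

lemma key (x : ℝ) (hx : 0 < x) :
    arctan ((x - x⁻¹) / 2) - 2 * arctan x = -(π / 2) := by
  have ha : 0 < arctan x := by rw [← Real.arctan_zero]; exact Real.arctan_strictMono hx
  have ha2 : arctan x < π / 2 := Real.arctan_lt_pi_div_two x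
  have hs : (0:ℝ) < Real.sqrt (1 + x ^ 2) := Real.sqrt_pos.mpr (by positivity)
  have hs2 : Real.sqrt (1 + x ^ 2) ^ 2 = 1 + x ^ 2 := Real.sq_sqrt (by positivity)
  have h : arctan ((x - x⁻¹) / 2) = 2 * arctan x - π / 2 := by
    rw [← Real.arctan_tan (x := 2 * arctan x - π / 2) (by linarith) (by linarith)]
    congr 1
    rw [Real.tan_eq_sin_div_cos, Real.sin_sub, Real.cos_sub, Real.sin_pi_div_two,
      Real.cos_pi_div_two, Real.sin_two_mul, Real.cos_two_mul, Real.cos_arctan,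
      Real.sin_arctan]
    rw [div_pow, one_pow, hs2]
    field_simp
    linear_combination (2 * x - 2 * x ^ 3) * hs2
  rw [h]; ring

theorem arctan_lucas_sub_two_arctan_phi (k : ℕ) :
    arctan (L (2 * k + 1) / 2) - 2 * arctan (phi ^ (2 * k + 1)) = -(π / 2) := by
  have hb := (binet (2 * k + 1)).1
  have hodd : Odd (2 * k + 1) := ⟨k, by ring⟩
  have hpsi : psi = -phi⁻¹ := by
    have h := phi_mul_psi
    have h0 : phi ≠ 0 := ne_of_gt phi_pos
    field_simp
    linarith [h]
  have hL : L (2 * k + 1) = phi ^ (2 * k + 1) - (phi ^ (2 * k + 1))⁻¹ := by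
    rw [hb, hpsi, hodd.neg_pow, inv_pow]
    ring
  have hx : 0 < phi ^ (2 * k + 1) := pow_pos phi_pos _
  rw [hL]
  exact key _ hx
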